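/- For every b > 0, ∫_1^∞ √(u+b)/(u²+b) du > π/2. -/

import Mathlib

open Real MeasureTheory Set Filter Topology

lemma sqrt_tendsto_atTop : Tendsto Real.sqrt atTop atTop :=
  (tendsto_rpow_atTop (by norm_num : (0:ℝ) < 1/2)).congr
    (fun x => (Real.sqrt_eq_rpow x).symm)

/-- tail integral -/
lemma tail_integral (a : ℝ) (ha : 0 < a) :
    IntegrableOn (fun u : ℝ => 1 / (Real.sqrt u * (u + 1))) (Ioi a) ∧
      ∫ u in Ioi a, 1 / (Real.sqrt u * (u + 1)) = Real.pi - 2 * Real.arctan (Real.sqrt a) := by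
  have hcont : ContinuousWithinAt (fun u : ℝ => 2 * Real.arctan (Real.sqrt u)) (Ici a) a := by
    exact (continuous_const.mul (Real.continuous_arctan.comp Real.continuous_sqrt)).continuousWithinAt
  have hderiv : ∀ x ∈ Ioi a, HasDerivAt (fun u : ℝ => 2 * Real.arctan (Real.sqrt u))
      (1 / (Real.sqrt x * (x + 1))) x := by
    intro x hx
    have hx0 : 0 < x := ha.trans hx
    have hs : 0 < Real.sqrt x := Real.sqrt_pos.mpr hx0
    have h1 : HasDerivAt Real.sqrt (1 / (2 * Real.sqrt x)) x := Real.hasDerivAt_sqrt hx0.ne'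
    have h2 : HasDerivAt Real.arctan (1 / (1 + (Real.sqrt x) ^ 2)) (Real.sqrt x) :=
      Real.hasDerivAt_arctan _
    have h3 := (h2.comp x h1).const_mul 2
    refine h3.congr_deriv ?_
    rw [Real.sq_sqrt hx0.le]
    field_simp
    ring
  have hpos : ∀ x ∈ Ioi a, 0 ≤ 1 / (Real.sqrt x * (x + 1)) := by
    intro x hx
    have hx0 : 0 < x := ha.trans hx
    positivity
  have htend : Tendsto (fun u : ℝ => 2 * Real.arctan (Real.sqrt u)) atTop (𝓝 Real.pi) := by
    have : Tendsto (fun u : ℝ => Real.arctan (Real.sqrt u)) atTop (𝓝 (Real.pi / 2)) :=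
      (Real.tendsto_arctan_atTop.mono_right nhdsWithin_le_nhds).comp sqrt_tendsto_atTop
    have := this.const_mul (2 : ℝ)
    simpa [mul_div_cancel₀] using this
  refine ⟨integrableOn_Ioi_deriv_of_nonneg hcont hderiv hpos htend, ?_⟩
  rw [integral_Ioi_of_hasDerivAt_of_nonneg hcont hderiv hpos htend]

lemma mid_integral (b c : ℝ) (hb : 0 < b) :
    ∫ u in (1:ℝ)..c, Real.sqrt b / (u ^ 2 + b)
      = Real.arctan (c / Real.sqrt b) - Real.arctan (1 / Real.sqrt b) := by
  have hsb : 0 < Real.sqrt b := Real.sqrt_pos.mpr hb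
  have hderiv : ∀ x ∈ uIcc (1:ℝ) c,
      HasDerivAt (fun u : ℝ => Real.arctan (u / Real.sqrt b)) (Real.sqrt b / (x ^ 2 + b)) x := by
    intro x _
    have h1 : HasDerivAt (fun u : ℝ => u / Real.sqrt b) (1 / Real.sqrt b) x := by
      simpa using (hasDerivAt_id x).div_const (Real.sqrt b)
    have h2 := (Real.hasDerivAt_arctan (x / Real.sqrt b)).comp x h1
    refine h2.congr_deriv ?_
    have hbb : Real.sqrt b * Real.sqrt b = b := Real.mul_self_sqrt hb.le
    field_simp
    nlinarith [hbb]
  have hint : IntervalIntegrable (fun u : ℝ => Real.sqrt b / (u ^ 2 + b)) volume 1 c := by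
    apply Continuous.intervalIntegrable
    apply continuous_const.div (by continuity)
    intro x; positivity
  rw [intervalIntegral.integral_eq_sub_of_hasDerivAt hderiv hint]

theorem stmt_8 (b : ℝ) (hb : 0 < b) :
    Real.pi / 2 < ∫ u in Ioi (1 : ℝ), Real.sqrt (u + b) / (u ^ 2 + b) := by
  set f : ℝ → ℝ := fun u => Real.sqrt (u + b) / (u ^ 2 + b) with hf_def
  set c : ℝ := max b 1 with hc_def
  have hc1 : (1:ℝ) ≤ c := le_max_right _ _
  have hcb : b ≤ c := le_max_left _ _
  have hc0 : (0:ℝ) < c := lt_of_lt_of_le one_pos hc1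
  set g : ℝ → ℝ := fun u => if u ≤ c then Real.sqrt b / (u ^ 2 + b)
      else 1 / (Real.sqrt u * (u + 1)) with hg_def
  -- continuity / measurability of f
  have hfc : Continuous f := by
    apply Continuous.div (by continuity) (by continuity)
    intro x; positivity
  -- integrability of f on Ioi 1
  have hfint : IntegrableOn f (Ioi 1) := by
    have hmaj : IntegrableOn (fun u : ℝ => Real.sqrt (1 + b) * u ^ (-(3/2) : ℝ)) (Ioi 1) :=
      (integrableOn_Ioi_rpow_of_lt (by norm_num) one_pos).const_mul _
    apply Integrable.mono' hmaj hfc.aestronglyMeasurable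
    filter_upwards [ae_restrict_mem measurableSet_Ioi] with u hu
    have hu1 : (1:ℝ) < u := hu
    have hu0 : (0:ℝ) < u := lt_trans one_pos hu1
    have hnn : 0 ≤ f u := by positivity
    rw [Real.norm_of_nonneg hnn]
    have h1 : Real.sqrt (u + b) ≤ Real.sqrt u * Real.sqrt (1 + b) := by
      rw [← Real.sqrt_mul hu0.le]
      apply Real.sqrt_le_sqrt
      nlinarith
    have h2 : f u ≤ Real.sqrt u * Real.sqrt (1 + b) / u ^ 2 :=
      div_le_div₀ (by positivity) h1 (by positivity) (by nlinarith)
    have h3 : u ^ (-(3/2) : ℝ) = Real.sqrt u / u ^ 2 := by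
      rw [Real.sqrt_eq_rpow, ← Real.rpow_natCast u 2, ← Real.rpow_sub hu0]
      norm_num
    rw [h3]
    calc f u ≤ Real.sqrt u * Real.sqrt (1 + b) / u ^ 2 := h2
      _ = Real.sqrt (1 + b) * (Real.sqrt u / u ^ 2) := by ring
  -- integrability of g pieces
  have htail := tail_integral c hc0
  have hg_mid : IntegrableOn g (Ioc 1 c) := by
    have : IntegrableOn (fun u : ℝ => Real.sqrt b / (u ^ 2 + b)) (Ioc 1 c) := by
      apply Continuous.integrableOn_Ioc
      apply continuous_const.div (by continuity)
      intro x; positivity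
    apply this.congr_fun ?_ measurableSet_Ioc
    intro u hu
    simp [hg_def, hu.2]
  have hg_tail : IntegrableOn g (Ioi c) := by
    apply htail.1.congr_fun ?_ measurableSet_Ioi
    intro u hu
    simp [hg_def, not_le.mpr (show c < u from hu)]
  have hgint : IntegrableOn g (Ioi 1) := by
    rw [← Ioc_union_Ioi_eq_Ioi hc1]
    exact hg_mid.union hg_tail
  -- value of ∫ g
  have hgval : ∫ u in Ioi (1:ℝ), g u = Real.pi / 2 := by
    rw [← Ioc_union_Ioi_eq_Ioi hc1,
      setIntegral_union (Ioc_disjoint_Ioi le_rfl) measurableSet_Ioi hg_mid hg_tail]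
    have e1 : ∫ u in Ioc (1:ℝ) c, g u = ∫ u in Ioc (1:ℝ) c, Real.sqrt b / (u ^ 2 + b) := by
      apply setIntegral_congr_fun measurableSet_Ioc
      intro u hu; simp [hg_def, hu.2]
    have e2 : ∫ u in Ioi c, g u = ∫ u in Ioi c, 1 / (Real.sqrt u * (u + 1)) := by
      apply setIntegral_congr_fun measurableSet_Ioi
      intro u hu; simp [hg_def, not_le.mpr (show c < u from hu)]
    rw [e1, e2, ← intervalIntegral.integral_of_le hc1, mid_integral b c hb, htail.2]
    rcases le_total b 1 with hb1 | hb1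
    · have hceq : c = 1 := max_eq_right hb1
      rw [hceq]
      rw [Real.sqrt_one, Real.arctan_one]
      ring
    · have hceq : c = b := max_eq_left hb1
      have hsb : 0 < Real.sqrt b := Real.sqrt_pos.mpr hb
      rw [hceq, Real.div_sqrt, one_div, Real.arctan_inv_of_pos hsb]
      ring
  -- pointwise strict inequality
  have hlt : ∀ u ∈ Ioi (1:ℝ), g u < f u := by
    intro u hu
    have hu1 : (1:ℝ) < u := hu
    have hu0 : (0:ℝ) < u := lt_trans one_pos hu1
    by_cases huc : u ≤ c
    · simp only [hg_def, if_pos huc, hf_def]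
      have hnum : Real.sqrt b < Real.sqrt (u + b) :=
        Real.sqrt_lt_sqrt hb.le (by linarith)
      gcongr
    · push_neg at huc
      simp only [hg_def, if_neg (not_le.mpr huc), hf_def]
      have hub : b < u := lt_of_le_of_lt hcb huc
      have hsu : 0 < Real.sqrt u := Real.sqrt_pos.mpr hu0
      have key : (1:ℝ) / (Real.sqrt u * (u + 1)) = Real.sqrt u / (u ^ 2 + u) := by
        rw [div_eq_div_iff (by positivity) (by positivity)]
        have := Real.mul_self_sqrt hu0.le
        nlinarith [this]
      rw [key]
      calc Real.sqrt u / (u ^ 2 + u) < Real.sqrt u / (u ^ 2 + b) :=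
            div_lt_div_of_pos_left hsu (by positivity) (by linarith)
        _ ≤ Real.sqrt (u + b) / (u ^ 2 + b) := by
            gcongr
            linarith
  -- conclude
  have hsubint : ∫ u in Ioi (1:ℝ), (f u - g u) =
      (∫ u in Ioi (1:ℝ), f u) - ∫ u in Ioi (1:ℝ), g u := integral_sub hfint hgint
  have hposint : 0 < ∫ u in Ioi (1:ℝ), (f u - g u) := by
    rw [integral_pos_iff_support_of_nonneg_ae]
    · have hsub : Ioi (1:ℝ) ⊆ Function.support (fun u => f u - g u) := by
        intro u hu
        exact sub_ne_zero.2 (hlt u hu).ne'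
      refine lt_of_lt_of_le ?_ (measure_mono hsub)
      rw [Measure.restrict_apply_self]
      simp [Real.volume_Ioi]
    · rw [EventuallyLE, ae_restrict_iff' measurableSet_Ioi]
      exact Eventually.of_forall fun u hu => sub_nonneg.2 (hlt u hu).le
    · exact hfint.sub hgint
  show Real.pi / 2 < ∫ u in Ioi (1:ℝ), f u
  linarith [hsubint, hposint, hgval.le, hgval.ge]
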